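/- Let p be a prime and let (R_j)_{j∈J} be a family of integral domains of characteristic p such that each R_j is perfect (the Frobenius x ↦ x^p is bijective), integrally closed in its fraction field, and has algebraically closed fraction field. Let 𝕎(R_j) denote the ring of p-typical Witt vectors of R_j with Witt vector Frobenius F. Then the additive endomorphism F − id of ∏_{j∈J} 𝕎(R_j) (acting componentwise) is surjective, and its kernel equals the image of the canonical ring homomorphism ∏_{j∈J} ℤ_p → ∏_{j∈J} 𝕎(R_j), given in each component by the identification ℤ_p ≅ 𝕎(𝔽_p) followed by the map 𝕎(𝔽_p) → 𝕎(R_j) induced by the embedding 𝔽_p → R_j. -/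

import Mathlib

set_option linter.unusedSectionVars false
set_option linter.unnecessarySimpa false

namespace WittFrobAux

open WittVector Polynomial

variable {p : ℕ} [hp : Fact p.Prime]


variable {p : ℕ} [hp : Fact p.Prime]

section Zmod
variable {R : Type*} [CommRing R] [IsDomain R] [CharP R p]

theorem aux_prod_zmod :
    (∏ d : ZMod p, (X - C d)) = X ^ p - X := by
  have hmonic : (X ^ p - X : (ZMod p)[X]).Monic := by
    apply monic_X_pow_sub
    rw [degree_X]
    exact_mod_cast hp.out.one_lt
  have hroots : ((X ^ p - X : (ZMod p)[X]).roots) = Finset.univ.val := by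
    have := FiniteField.roots_X_pow_card_sub_X (ZMod p)
    rwa [ZMod.card p] at this
  have hdeg : (X ^ p - X : (ZMod p)[X]).natDegree = p := by
    have := FiniteField.X_pow_card_sub_X_natDegree_eq (ZMod p) hp.out.one_lt
    exact this
  have hcard : Multiset.card (X ^ p - X : (ZMod p)[X]).roots =
      (X ^ p - X : (ZMod p)[X]).natDegree := by
    rw [hroots, hdeg]
    simpa using (ZMod.card p).symm
  have := C_leadingCoeff_mul_prod_multiset_X_sub_C (p := (X ^ p - X : (ZMod p)[X])) hcard
  rw [hmonic.leadingCoeff, map_one, one_mul, hroots] at this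
  rw [← this]
  rfl

theorem aux_exists_zmod {c : R} (hc : c ^ p = c) :
    ∃ d : ZMod p, ZMod.castHom (dvd_refl p) R d = c := by
  set φ := ZMod.castHom (dvd_refl p) R
  have h1 : (∏ d : ZMod p, (c - φ d)) = 0 := by
    have h2 : (∏ d : ZMod p, (X - C (φ d))) = (X ^ p - X : R[X]) := by
      have := congrArg (Polynomial.map φ) (aux_prod_zmod (p := p))
      simpa [Polynomial.map_prod] using this
    have h3 := congrArg (Polynomial.eval c) h2
    simpa [Polynomial.eval_prod, hc] using h3
  obtain ⟨d, -, hd⟩ := Finset.prod_eq_zero_iff.mp h1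
  exact ⟨d, (sub_eq_zero.mp hd).symm⟩

end Zmod



section AS
variable {R : Type*} [CommRing R] [IsDomain R] [CharP R p]
  [IsIntegrallyClosed R] [IsAlgClosed (FractionRing R)]

theorem aux_artin_schreier (c : R) : ∃ a : R, a ^ p - a = c := by
  set K := FractionRing R
  set c' : K := algebraMap R K c
  have hdegXC : (X + C c' : K[X]).degree ≤ 1 := by
    simpa using degree_add_le (X : K[X]) (C c')
  have hlt : (X + C c' : K[X]).degree < (X ^ p : K[X]).degree := by
    rw [degree_X_pow]
    exact lt_of_le_of_lt hdegXC (by exact_mod_cast hp.out.one_lt)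
  have hdeg : (X ^ p - (X + C c') : K[X]).degree = p := by
    rw [degree_sub_eq_left_of_degree_lt hlt, degree_X_pow]
  obtain ⟨t, ht⟩ := IsAlgClosed.exists_root (X ^ p - (X + C c') : K[X])
    (by rw [hdeg]; exact_mod_cast hp.out.ne_zero)
  have ht' : t ^ p - t - c' = 0 := by
    have := ht
    simp only [IsRoot.def, eval_sub, eval_add, eval_pow, eval_X, eval_C] at this
    linear_combination this
  have hint : IsIntegral R t := by
    refine ⟨X ^ p - (X + C c), ?_, ?_⟩
    · refine monic_X_pow_sub ?_
      refine lt_of_le_of_lt (degree_add_le _ _) ?_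
      rw [max_lt_iff, degree_X]
      exact ⟨by exact_mod_cast hp.out.one_lt,
        lt_of_le_of_lt degree_C_le (by exact_mod_cast hp.out.pos)⟩
    · simp only [eval₂_sub, eval₂_add, eval₂_pow, eval₂_X, eval₂_C]
      linear_combination ht'
  obtain ⟨a, ha⟩ := IsIntegrallyClosed.isIntegral_iff.mp hint
  refine ⟨a, IsFractionRing.injective R K ?_⟩
  rw [map_sub, map_pow, ha]
  linear_combination ht'

end AS



section Witt
variable {R : Type*} [CommRing R] [CharP R p]

local notation "𝕎" => WittVector p

theorem aux_iter_versch_add (n : ℕ) (x y : 𝕎 R) :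
    verschiebung^[n] (x + y) = verschiebung^[n] x + verschiebung^[n] y := by
  induction n with
  | zero => rfl
  | succ n ih =>
    simp only [Function.iterate_succ_apply', ih, map_add]

theorem aux_iter_versch_sub (n : ℕ) (x y : 𝕎 R) :
    verschiebung^[n] (x - y) = verschiebung^[n] x - verschiebung^[n] y := by
  induction n with
  | zero => rfl
  | succ n ih =>
    simp only [Function.iterate_succ_apply', ih, map_sub]

theorem aux_iter_versch_coeff_lt (n : ℕ) (x : 𝕎 R) {i : ℕ} (hi : i < n) :
    (verschiebung^[n] x).coeff i = 0 := by
  induction n generalizing i with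
  | zero => omega
  | succ n ih =>
    rw [Function.iterate_succ_apply']
    cases i with
    | zero => exact verschiebung_coeff_zero _
    | succ i => rw [verschiebung_coeff_succ]; exact ih (by omega)

theorem aux_iter_versch_coeff_self (n : ℕ) (x : 𝕎 R) :
    (verschiebung^[n] x).coeff n = x.coeff 0 := by
  have := iterate_verschiebung_coeff x n 0
  simpa using this

theorem aux_frobenius_iter_versch (n : ℕ) (x : 𝕎 R) :
    frobenius (verschiebung^[n] x) = verschiebung^[n] (frobenius x) := by
  induction n with
  | zero => rfl
  | succ n ih =>
    rw [Function.iterate_succ_apply', Function.iterate_succ_apply', ← ih,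
      ← verschiebung_frobenius_comm.eq]

theorem aux_frobenius_teichmuller (a : R) :
    frobenius (teichmuller p a) = teichmuller p (a ^ p) := by
  ext n
  rw [coeff_frobenius_charP]
  cases n with
  | zero => rw [teichmuller_coeff_zero, teichmuller_coeff_zero]
  | succ n =>
    rw [teichmuller_coeff_pos p a _ n.succ_pos, teichmuller_coeff_pos p _ _ n.succ_pos,
      zero_pow hp.out.ne_zero]

theorem aux_coeff_zero_add (x y : 𝕎 R) : (x + y).coeff 0 = x.coeff 0 + y.coeff 0 := by
  simp [add_coeff, peval, Function.uncurry]

theorem aux_coeff_zero_sub (x y : 𝕎 R) : (x - y).coeff 0 = x.coeff 0 - y.coeff 0 := by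
  simp [sub_coeff, peval, Function.uncurry]

theorem aux_init_coeff (n : ℕ) (x : 𝕎 R) (i : ℕ) :
    (init n x).coeff i = if i < n then x.coeff i else 0 := by
  rw [init, select, coeff_mk]
  congr

theorem aux_init_eq (n : ℕ) {x y : 𝕎 R} (h : ∀ i < n, x.coeff i = y.coeff i) :
    init n x = init n y := by
  ext i
  rw [aux_init_coeff, aux_init_coeff]
  split_ifs with hi
  · exact h i hi
  · rfl

theorem aux_coeff_congr (n : ℕ) {x y : 𝕎 R} (b : 𝕎 R)
    (h : ∀ i < n, x.coeff i = y.coeff i) :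
    ∀ i < n, (frobenius x - x - b).coeff i = (frobenius y - y - b).coeff i := by
  have hF : init n (WittVector.frobenius x : 𝕎 R) = init n (frobenius y) := by
    apply aux_init_eq
    intro i hi
    rw [coeff_frobenius_charP, coeff_frobenius_charP, h i hi]
  have hx : init n x = init n y := aux_init_eq n h
  have h1 : init n (frobenius x - x) = init n (frobenius y - y) := by
    rw [init_sub, hF, hx, ← init_sub]
  have h2 : init n (frobenius x - x - b) = init n (frobenius y - y - b) := by
    rw [init_sub, h1, ← init_sub]
  intro i hi
  have := congrArg (fun z => WittVector.coeff z i) h2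
  simpa [aux_init_coeff, hi] using this

end Witt

section Main
variable {R : Type*} [CommRing R] [CharP R p]

local notation "𝕎" => WittVector p

theorem aux_step (hAS : ∀ c : R, ∃ a : R, a ^ p - a = c) (b : 𝕎 R) (n : ℕ)
    (x : 𝕎 R) (h : ∀ i < n, (frobenius x - x - b).coeff i = 0) :
    ∃ x' : 𝕎 R, (∀ i < n + 1, (frobenius x' - x' - b).coeff i = 0) ∧
      ∀ i < n, x'.coeff i = x.coeff i := by
  obtain ⟨z, hyz⟩ : ∃ z : 𝕎 R, frobenius x - x - b = verschiebung^[n] z :=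
    ⟨(frobenius x - x - b).shift n, eq_iterate_verschiebung h⟩
  obtain ⟨a, ha⟩ := hAS (-z.coeff 0)
  refine ⟨x + verschiebung^[n] (teichmuller p a), ?_, ?_⟩
  · have hFx' : frobenius (x + verschiebung^[n] (teichmuller p a)) =
        frobenius x + verschiebung^[n] (teichmuller p (a ^ p)) := by
      rw [map_add, aux_frobenius_iter_versch, aux_frobenius_teichmuller]
    have key : frobenius (x + verschiebung^[n] (teichmuller p a)) -
        (x + verschiebung^[n] (teichmuller p a)) - b =
        verschiebung^[n] (z + teichmuller p (a ^ p) - teichmuller p a) := by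
      have hVsum : verschiebung^[n] (z + teichmuller p (a ^ p) - teichmuller p a) =
          verschiebung^[n] z + verschiebung^[n] (teichmuller p (a ^ p)) -
            verschiebung^[n] (teichmuller p a) := by
        rw [aux_iter_versch_sub n (z + teichmuller p (a ^ p)) (teichmuller p a),
          aux_iter_versch_add n z (teichmuller p (a ^ p))]
      rw [hFx', hVsum, ← hyz]
      abel
    have hw0 : (z + teichmuller p (a ^ p) - teichmuller p a).coeff 0 = 0 := by
      rw [aux_coeff_zero_sub, aux_coeff_zero_add, teichmuller_coeff_zero,
        teichmuller_coeff_zero]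
      linear_combination ha
    intro i hi
    rw [key]
    rcases Nat.lt_or_ge i n with h' | h'
    · exact aux_iter_versch_coeff_lt n _ h'
    · have : i = n := by omega
      subst this
      rw [aux_iter_versch_coeff_self, hw0]
  · intro i hi
    have h1 : init n (x + verschiebung^[n] (teichmuller p a)) = init n x := by
      rw [init_add]
      have h0 : init n (verschiebung^[n] (teichmuller p a) : 𝕎 R) = 0 := by
        ext k
        rw [aux_init_coeff]
        split_ifs with hk
        · rw [aux_iter_versch_coeff_lt n _ hk, zero_coeff]
        · simp
      rw [h0, add_zero, init_init]
    have := congrArg (fun u => WittVector.coeff u i) h1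
    simpa [aux_init_coeff, hi] using this

noncomputable def auxSeq (hAS : ∀ c : R, ∃ a : R, a ^ p - a = c) (b : 𝕎 R) :
    ∀ n : ℕ, {x : 𝕎 R // ∀ i < n, (frobenius x - x - b).coeff i = 0}
  | 0 => ⟨0, fun i hi => absurd hi (Nat.not_lt_zero i)⟩
  | n + 1 =>
    ⟨(aux_step hAS b n (auxSeq hAS b n).1 (auxSeq hAS b n).2).choose,
      (aux_step hAS b n (auxSeq hAS b n).1 (auxSeq hAS b n).2).choose_spec.1⟩

theorem auxSeq_stab (hAS : ∀ c : R, ∃ a : R, a ^ p - a = c) (b : 𝕎 R) (n : ℕ) :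
    ∀ i < n, (auxSeq hAS b (n + 1)).1.coeff i = (auxSeq hAS b n).1.coeff i := by
  intro i hi
  exact (aux_step hAS b n (auxSeq hAS b n).1 (auxSeq hAS b n).2).choose_spec.2 i hi

theorem aux_surj_single (hAS : ∀ c : R, ∃ a : R, a ^ p - a = c) (b : 𝕎 R) :
    ∃ x : 𝕎 R, frobenius x - x = b := by
  have mono : ∀ m n : ℕ, m + 1 ≤ n →
      (auxSeq hAS b n).1.coeff m = (auxSeq hAS b (m + 1)).1.coeff m := by
    intro m n h
    induction n with
    | zero => omega
    | succ n ih =>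
      rcases Nat.lt_or_ge (m + 1) (n + 1) with h' | h'
      · rw [auxSeq_stab hAS b n m (by omega), ih (by omega)]
      · have : m + 1 = n + 1 := by omega
        rw [this]
  set xlim := WittVector.mk p (fun m => (auxSeq hAS b (m + 1)).1.coeff m) with hxlim
  have hagree : ∀ n : ℕ, ∀ i < n, xlim.coeff i = (auxSeq hAS b n).1.coeff i := by
    intro n i hi
    have h1 : xlim.coeff i = (auxSeq hAS b (i + 1)).1.coeff i := rfl
    rw [h1, ← mono i n hi]
  refine ⟨xlim, sub_eq_zero.mp ?_⟩
  have : frobenius xlim - xlim - b = 0 := by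
    ext m
    rw [zero_coeff]
    have h2 := aux_coeff_congr (m + 1) b (hagree (m + 1)) m (Nat.lt_succ_self m)
    rw [h2]
    exact (auxSeq hAS b (m + 1)).2 m (Nat.lt_succ_self m)
  have h3 : frobenius xlim - xlim - b = (frobenius xlim - xlim) - b := rfl
  rw [h3] at this
  rw [sub_eq_zero] at this
  rw [this, sub_self]

end Main

end WittFrobAux

open WittFrobAux WittVector in
/-- Let `(R j)` be a family of perfect characteristic-`p` integral domains, each
integrally closed with algebraically closed fraction field.  Then `F - id` is surjective
on `∏ 𝕎(R j)` (componentwise Witt vector Frobenius), and its kernel is the image of the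
canonical ring homomorphism `∏ ℤ_p → ∏ 𝕎(R j)` coming from `ℤ_p ≅ 𝕎(𝔽_p) → 𝕎(R j)`. -/
theorem wittVector_frobenius_sub_id_surjective_kernel
    (p : ℕ) [Fact p.Prime] {J : Type*} (R : J → Type*)
    [∀ j, CommRing (R j)] [∀ j, IsDomain (R j)] [∀ j, CharP (R j) p]
    (hperf : ∀ j, Function.Bijective (fun x : R j => x ^ p))
    [∀ j, IsIntegrallyClosed (R j)] [∀ j, IsAlgClosed (FractionRing (R j))] :
    Function.Surjective
      (fun (x : ∀ j, WittVector p (R j)) (j : J) =>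
        WittVector.frobenius (x j) - x j) ∧
      {x : ∀ j, WittVector p (R j) |
          (fun j => WittVector.frobenius (x j) - x j) = 0} =
        Set.range
          (Pi.ringHom fun j =>
            ((WittVector.map (ZMod.castHom (dvd_refl p) (R j))).comp
                (WittVector.equiv p).symm.toRingHom).comp
              (Pi.evalRingHom (fun _ : J => ℤ_[p]) j)) := by
  have hAS : ∀ j, ∀ c : R j, ∃ a : R j, a ^ p - a = c := fun j c =>
    aux_artin_schreier (p := p) c
  constructor
  · intro b
    choose x hx using fun j => aux_surj_single (hAS j) (b j)
    exact ⟨x, funext hx⟩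
  · ext x
    simp only [Set.mem_setOf_eq, Set.mem_range]
    constructor
    · intro h
      have hfix : ∀ j, WittVector.frobenius (x j) = x j := fun j =>
        sub_eq_zero.mp (congrFun h j)
      have hc : ∀ j n, ((x j).coeff n) ^ p = (x j).coeff n := by
        intro j n
        have := congrArg (fun z => WittVector.coeff z n) (hfix j)
        simpa [coeff_frobenius_charP] using this
      choose d hd using fun j n => aux_exists_zmod (p := p) (hc j n)
      refine ⟨fun j => WittVector.equiv p (WittVector.mk p (d j)), ?_⟩
      funext j
      simp only [Pi.ringHom, Pi.ringHom_apply, RingHom.comp_apply, Pi.evalRingHom_apply,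
        RingEquiv.toRingHom_eq_coe, RingHom.coe_coe, RingEquiv.symm_apply_apply]
      ext n
      rw [WittVector.map_coeff]
      exact hd j n
    · rintro ⟨z, rfl⟩
      funext j
      simp only [Pi.ringHom, Pi.ringHom_apply, RingHom.comp_apply, Pi.evalRingHom_apply,
        RingEquiv.toRingHom_eq_coe, RingHom.coe_coe, Pi.zero_apply]
      rw [sub_eq_zero]
      ext n
      rw [coeff_frobenius_charP, WittVector.map_coeff,
        ← map_pow, ZMod.pow_card]
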